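/- Let B be a minimal Markov basis and let t ∈ ℤ^d with F_t ≠ ∅. Write the partition of F_t into its B_{|t|−1}-equivalence classes as F_t = F_{t,1} ∪ ⋯ ∪ F_{t,K_t}, and set B_t = {moves z : Az⁺ = Az⁻ = t}. Then B ∩ B_t consists of exactly K_t − 1 moves, each of whose positive and negative parts lie in two different B_{|t|−1}-equivalence classes of F_t, and the graph whose vertices are the classes F_{t,1},…,F_{t,K_t} and which has, for each z ∈ B ∩ B_t, an edge joining the class containing z⁺ to the class containing z⁻, is a tree (connected and acyclic). -/

import Mathlib

open scoped BigOperators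

section Defs

variable {ι κ : Type*} [Fintype ι]

/-- Embed a frequency vector `x ∈ ℕ^ι` into `ℤ^ι`. -/
def natToInt (x : ι → ℕ) : ι → ℤ := fun i => (x i : ℤ)

/-- The fiber of `t`: all frequency vectors `x` with `A x = t`. -/
def fiberOf (A : Matrix κ ι ℤ) (t : κ → ℤ) : Set (ι → ℕ) :=
  {x | A.mulVec (natToInt x) = t}

/-- A move for `A`: an integer vector in the kernel of `A`. -/
def IsMove (A : Matrix κ ι ℤ) (z : ι → ℤ) : Prop := A.mulVec z = 0

/-- The positive part `z⁺` of an integer vector, as a frequency vector. -/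
def posOf (z : ι → ℤ) : ι → ℕ := fun i => (z i).toNat

/-- The negative part `z⁻` of an integer vector, as a frequency vector. -/
def negOf (z : ι → ℤ) : ι → ℕ := fun i => (-z i).toNat

/-- The degree of a move: `deg z = |z⁺|`. -/
def degOf (z : ι → ℤ) : ℕ := ∑ i, posOf z i

/-- One step: add or subtract one move of `B`, staying in `ℕ^ι`. -/
def MStep (B : Set (ι → ℤ)) (x y : ι → ℕ) : Prop :=
  ∃ z ∈ B, natToInt y = natToInt x + z ∨ natToInt y = natToInt x - z

/-- `y` is accessible from `x` by the moves of `B` (staying nonnegative throughout,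
since all intermediate points are frequency vectors). -/
def Accessible (B : Set (ι → ℤ)) : (ι → ℕ) → (ι → ℕ) → Prop :=
  Relation.ReflTransGen (MStep B)

/-- A Markov basis: a finite set of moves such that every fiber forms a single
equivalence class for mutual accessibility. -/
def IsMarkovBasis (A : Matrix κ ι ℤ) (B : Set (ι → ℤ)) : Prop :=
  B.Finite ∧ (∀ z ∈ B, IsMove A z) ∧
    ∀ t : κ → ℤ, ∀ x ∈ fiberOf A t, ∀ y ∈ fiberOf A t, Accessible B x y

/-- A minimal Markov basis: no proper subset is a Markov basis. -/
def IsMinimalMarkovBasis (A : Matrix κ ι ℤ) (B : Set (ι → ℤ)) : Prop :=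
  IsMarkovBasis A B ∧ ∀ B' ⊂ B, ¬ IsMarkovBasis A B'

/-- An indispensable monomial: every Markov basis contains a move whose
positive or negative part is `x`. -/
def IsIndispensableMonomial (A : Matrix κ ι ℤ) (x : ι → ℕ) : Prop :=
  ∀ B : Set (ι → ℤ), IsMarkovBasis A B → ∃ z ∈ B, posOf z = x ∨ negOf z = x

/-- `B_n`: the set of moves of degree at most `n`. -/
def Bmoves (A : Matrix κ ι ℤ) (n : ℕ) : Set (ι → ℤ) :=
  {z | IsMove A z ∧ degOf z ≤ n}

/-- The sample size `|t|` of a sufficient statistic `t` (well defined on nonempty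
fibers under homogeneity). -/
noncomputable def sampleSize (A : Matrix κ ι ℤ) (t : κ → ℤ) : ℕ :=
  sInf {n | ∃ x ∈ fiberOf A t, ∑ i, x i = n}

/-- The `B_{|t|-1}`-equivalence classes of the fiber of `t`. -/
noncomputable def fiberClasses (A : Matrix κ ι ℤ) (t : κ → ℤ) : Set (Set (ι → ℕ)) :=
  {C | ∃ x ∈ fiberOf A t,
    C = {y | y ∈ fiberOf A t ∧ Accessible (Bmoves A (sampleSize A t - 1)) x y}}

/-- Homogeneity: some rational vector `w` has `w ⬝ aᵢ = 1` for every column `aᵢ`. -/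
def IsHomogeneousMatrix [Fintype κ] (A : Matrix κ ι ℤ) : Prop :=
  ∃ w : κ → ℚ, ∀ i : ι, ∑ j, w j * (A j i : ℚ) = 1

end Defs

set_option linter.unusedSectionVars false


section Aux

variable {ι κ : Type*} [Fintype ι] [Fintype κ]

lemma posOf_sub_negOf (z : ι → ℤ) (i : ι) :
    (posOf z i : ℤ) - (negOf z i : ℤ) = z i := by
  simp only [posOf, negOf]; omega

lemma natToInt_posOf_sub (z : ι → ℤ) :
    natToInt (posOf z) - natToInt (negOf z) = z := by
  funext i; simpa [natToInt] using posOf_sub_negOf z i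

lemma posOf_neg (z : ι → ℤ) : posOf (-z) = negOf z := by
  funext i; simp [posOf, negOf]

lemma negOf_neg (z : ι → ℤ) : negOf (-z) = posOf z := by
  funext i; simp [posOf, negOf]

lemma sum_eq_zero_of_isMove {A : Matrix κ ι ℤ} (hA : IsHomogeneousMatrix A)
    {z : ι → ℤ} (hz : IsMove A z) : ∑ i, z i = 0 := by
  obtain ⟨w, hw⟩ := hA
  have key : ∀ j, (∑ i, (A j i : ℚ) * (z i : ℚ)) = 0 := by
    intro j
    have h1 : (∑ i, A j i * z i) = 0 := by
      have := congrFun hz j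
      simpa [Matrix.mulVec, dotProduct] using this
    exact_mod_cast congrArg (fun m : ℤ => (m : ℚ)) h1
  have h0 : (∑ i, (z i : ℚ)) = 0 := by
    calc ∑ i, (z i : ℚ) = ∑ i, (∑ j, w j * (A j i : ℚ)) * z i := by
          refine Finset.sum_congr rfl fun i _ => ?_
          rw [hw i, one_mul]
      _ = ∑ i, ∑ j, w j * ((A j i : ℚ) * z i) := by
          refine Finset.sum_congr rfl fun i _ => ?_
          rw [Finset.sum_mul]
          exact Finset.sum_congr rfl fun j _ => mul_assoc _ _ _
      _ = ∑ j, ∑ i, w j * ((A j i : ℚ) * z i) := Finset.sum_comm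
      _ = ∑ j, w j * ∑ i, (A j i : ℚ) * z i := by
          refine Finset.sum_congr rfl fun j _ => ?_
          rw [Finset.mul_sum]
      _ = 0 := by
          refine Finset.sum_eq_zero fun j _ => ?_
          rw [key j, mul_zero]
  exact_mod_cast h0

lemma isMove_of_fiber_pair {A : Matrix κ ι ℤ} {t : κ → ℤ} {x y : ι → ℕ}
    (hx : x ∈ fiberOf A t) (hy : y ∈ fiberOf A t) :
    IsMove A (natToInt x - natToInt y) := by
  have hx' : A.mulVec (natToInt x) = t := hx
  have hy' : A.mulVec (natToInt y) = t := hy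
  show A.mulVec _ = 0
  rw [Matrix.mulVec_sub, hx', hy', sub_self]

lemma sum_fiber_eq {A : Matrix κ ι ℤ} (hA : IsHomogeneousMatrix A) {t : κ → ℤ}
    {x y : ι → ℕ} (hx : x ∈ fiberOf A t) (hy : y ∈ fiberOf A t) :
    ∑ i, x i = ∑ i, y i := by
  have h := sum_eq_zero_of_isMove hA (isMove_of_fiber_pair hx hy)
  have h2 : (∑ i, ((x i : ℤ) - (y i : ℤ))) = 0 := by
    simpa [natToInt] using h
  rw [Finset.sum_sub_distrib] at h2
  have : (∑ i, (x i : ℤ)) = ∑ i, (y i : ℤ) := by linarith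
  exact_mod_cast this

lemma degOf_eq_sum_negOf {A : Matrix κ ι ℤ} (hA : IsHomogeneousMatrix A)
    {z : ι → ℤ} (hz : IsMove A z) : degOf z = ∑ i, negOf z i := by
  have h := sum_eq_zero_of_isMove hA hz
  have h2 : ∑ i, ((posOf z i : ℤ) - negOf z i) = 0 := by
    rw [Finset.sum_congr rfl fun i _ => posOf_sub_negOf z i]; exact h
  rw [Finset.sum_sub_distrib] at h2
  have : (∑ i, (posOf z i : ℤ)) = ∑ i, (negOf z i : ℤ) := by linarith
  exact_mod_cast this

lemma mulVec_negOf_eq {A : Matrix κ ι ℤ} {z : ι → ℤ} (hz : IsMove A z) :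
    A.mulVec (natToInt (negOf z)) = A.mulVec (natToInt (posOf z)) := by
  have h : A.mulVec (natToInt (posOf z)) - A.mulVec (natToInt (negOf z)) = 0 := by
    rw [← Matrix.mulVec_sub, natToInt_posOf_sub]; exact hz
  exact (sub_eq_zero.mp h).symm

lemma step_decomp_add {x y : ι → ℕ} {z : ι → ℤ} (h : natToInt y = natToInt x + z) :
    ∃ u : ι → ℕ, (∀ i, x i = negOf z i + u i) ∧ (∀ i, y i = posOf z i + u i) := by
  refine ⟨fun i => x i - negOf z i, fun i => ?_, fun i => ?_⟩ <;>
  · have h1 : (y i : ℤ) = (x i : ℤ) + z i := by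
      have := congrFun h i
      simpa [natToInt] using this
    simp only [posOf, negOf]
    omega

lemma mStep_symm {B : Set (ι → ℤ)} {x y : ι → ℕ} (h : MStep B x y) : MStep B y x := by
  obtain ⟨z, hz, h | h⟩ := h
  · exact ⟨z, hz, Or.inr (by rw [h]; ring)⟩
  · exact ⟨z, hz, Or.inl (by rw [h]; ring)⟩

lemma accessible_symm {B : Set (ι → ℤ)} {x y : ι → ℕ} (h : Accessible B x y) :
    Accessible B y x :=
  @Std.Symm.symm _ _ (@Relation.ReflTransGen.stdSymm _ _ ⟨fun _ _ hs => mStep_symm hs⟩) _ _ h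

lemma accessible_mono {B B' : Set (ι → ℤ)} (hBB : B ⊆ B') {x y : ι → ℕ}
    (h : Accessible B x y) : Accessible B' x y := by
  refine Relation.ReflTransGen.mono ?_ _ _ h
  rintro a b ⟨z, hz, hc⟩
  exact ⟨z, hBB hz, hc⟩

lemma mStep_translate {B : Set (ι → ℤ)} {x y : ι → ℕ} (u : ι → ℕ)
    (h : MStep B x y) : MStep B (x + u) (y + u) := by
  obtain ⟨z, hz, hc | hc⟩ := h
  · refine ⟨z, hz, Or.inl ?_⟩
    funext i
    have := congrFun hc i
    simp only [natToInt, Pi.add_apply, Nat.cast_add] at *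
    omega
  · refine ⟨z, hz, Or.inr ?_⟩
    funext i
    have := congrFun hc i
    simp only [natToInt, Pi.add_apply, Pi.sub_apply, Nat.cast_add] at *
    omega

lemma accessible_translate {B : Set (ι → ℤ)} {x y : ι → ℕ} (u : ι → ℕ)
    (h : Accessible B x y) : Accessible B (x + u) (y + u) := by
  induction h with
  | refl => exact Relation.ReflTransGen.refl
  | tail _ hstep ih => exact ih.tail (mStep_translate u hstep)

lemma mem_fiber_of_mStep {A : Matrix κ ι ℤ} {B : Set (ι → ℤ)} {t : κ → ℤ}
    (hm : ∀ z ∈ B, IsMove A z) {x y : ι → ℕ} (hx : x ∈ fiberOf A t)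
    (h : MStep B x y) : y ∈ fiberOf A t := by
  have hx' : A.mulVec (natToInt x) = t := hx
  obtain ⟨z, hz, hc | hc⟩ := h
  · show A.mulVec (natToInt y) = t
    rw [hc, Matrix.mulVec_add, hx', hm z hz, add_zero]
  · show A.mulVec (natToInt y) = t
    rw [hc, Matrix.mulVec_sub, hx', hm z hz, sub_zero]

lemma deg_le_of_step_add {A : Matrix κ ι ℤ} (hA : IsHomogeneousMatrix A)
    {x y : ι → ℕ} {z : ι → ℤ} (hz : IsMove A z)
    (h : natToInt y = natToInt x + z) : degOf z ≤ ∑ i, x i := by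
  obtain ⟨u, hxu, -⟩ := step_decomp_add h
  rw [degOf_eq_sum_negOf hA hz]
  exact Finset.sum_le_sum fun i _ => by rw [hxu i]; omega

end Aux

section Aux2

variable {ι κ : Type*} [Fintype ι] [Fintype κ]

lemma accessible_inter_bmoves {A : Matrix κ ι ℤ} {B : Set (ι → ℤ)} {t : κ → ℤ}
    (hA : IsHomogeneousMatrix A) (hm : ∀ z ∈ B, IsMove A z) {m : ℕ} {y : ι → ℕ} :
    ∀ {x : ι → ℕ}, Accessible B x y → x ∈ fiberOf A t → (∑ i, x i) = m →
      Accessible (B ∩ Bmoves A m) x y := by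
  intro x hacc
  induction hacc using Relation.ReflTransGen.head_induction_on with
  | refl => intro _ _; exact Relation.ReflTransGen.refl
  | @head a c hstep hrest ih =>
    intro ha hs
    obtain ⟨z, hzB, hcase⟩ := hstep
    have hcfib : c ∈ fiberOf A t := mem_fiber_of_mStep hm ha ⟨z, hzB, hcase⟩
    have hcsum : (∑ i, c i) = m := by rw [← hs]; exact sum_fiber_eq hA hcfib ha
    have hdeg : degOf z ≤ m := by
      rcases hcase with hc | hc
      · rw [← hs]; exact deg_le_of_step_add hA (hm z hzB) hc
      · rw [← hcsum]
        exact deg_le_of_step_add hA (hm z hzB)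
          (show natToInt a = natToInt c + z by rw [hc]; ring)
    exact Relation.ReflTransGen.head ⟨z, ⟨hzB, hm z hzB, hdeg⟩, hcase⟩ (ih hcfib hcsum)

lemma bmoves_mono {A : Matrix κ ι ℤ} {m m' : ℕ} (h : m ≤ m') :
    Bmoves A m ⊆ Bmoves A m' := fun _ hz => ⟨hz.1, hz.2.trans h⟩

lemma step_conv_add {A : Matrix κ ι ℤ} {B : Set (ι → ℤ)}
    (hA : IsHomogeneousMatrix A) (hMB : IsMarkovBasis A B) {m : ℕ} {x y : ι → ℕ}
    {z : ι → ℤ} (hzmv : IsMove A z) (hzdeg : degOf z ≤ m)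
    (hc : natToInt y = natToInt x + z) :
    Accessible (B ∩ Bmoves A m) x y := by
  obtain ⟨u, hxu, hyu⟩ := step_decomp_add hc
  have hpos : posOf z ∈ fiberOf A (A.mulVec (natToInt (posOf z))) := rfl
  have hneg : negOf z ∈ fiberOf A (A.mulVec (natToInt (posOf z))) := mulVec_negOf_eq hzmv
  have hacc : Accessible B (negOf z) (posOf z) := hMB.2.2 _ _ hneg _ hpos
  have hsum : (∑ i, negOf z i) = degOf z := (degOf_eq_sum_negOf hA hzmv).symm
  have h2 : Accessible (B ∩ Bmoves A (degOf z)) (negOf z) (posOf z) :=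
    accessible_inter_bmoves hA hMB.2.1 hacc hneg hsum
  have h3 : Accessible (B ∩ Bmoves A m) (negOf z) (posOf z) :=
    accessible_mono (Set.inter_subset_inter_right _ (bmoves_mono hzdeg)) h2
  have h4 := accessible_translate u h3
  have hx' : x = negOf z + u := funext fun i => hxu i
  have hy' : y = posOf z + u := funext fun i => hyu i
  rw [hx', hy']
  exact h4

lemma accessible_of_bmoves {A : Matrix κ ι ℤ} {B : Set (ι → ℤ)}
    (hA : IsHomogeneousMatrix A) (hMB : IsMarkovBasis A B) {m : ℕ} {x y : ι → ℕ}
    (h : Accessible (Bmoves A m) x y) : Accessible (B ∩ Bmoves A m) x y := by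
  induction h with
  | refl => exact Relation.ReflTransGen.refl
  | tail _ hstep ih =>
    refine ih.trans ?_
    obtain ⟨z, ⟨hzmv, hzdeg⟩, hc | hc⟩ := hstep
    · exact step_conv_add hA hMB hzmv hzdeg hc
    · refine accessible_symm (step_conv_add hA hMB hzmv hzdeg ?_)
      rw [hc]; ring

lemma removal {A : Matrix κ ι ℤ} {B : Set (ι → ℤ)}
    (hMB : IsMarkovBasis A B) {z₀ : ι → ℤ}
    (hrep : Accessible (B \ {z₀}) (negOf z₀) (posOf z₀)) :
    IsMarkovBasis A (B \ {z₀}) := by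
  refine ⟨hMB.1.subset Set.diff_subset, fun z hz => hMB.2.1 z hz.1, ?_⟩
  have step : ∀ a b : ι → ℕ, MStep B a b → Accessible (B \ {z₀}) a b := by
    intro a b hs
    obtain ⟨z, hzB, hcase⟩ := hs
    by_cases hzz : z = z₀
    · subst hzz
      rcases hcase with hc | hc
      · obtain ⟨u, hau, hbu⟩ := step_decomp_add hc
        have h4 := accessible_translate u hrep
        have ha' : a = negOf z + u := funext fun i => hau i
        have hb' : b = posOf z + u := funext fun i => hbu i
        rw [ha', hb']; exact h4
      · have hc' : natToInt a = natToInt b + z := by rw [hc]; ring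
        obtain ⟨u, hbu, hau⟩ := step_decomp_add hc'
        have h4 := accessible_translate u hrep
        have ha' : a = posOf z + u := funext fun i => hau i
        have hb' : b = negOf z + u := funext fun i => hbu i
        rw [ha', hb']; exact accessible_symm h4
    · exact Relation.ReflTransGen.single ⟨z, ⟨hzB, hzz⟩, hcase⟩
  intro t x hx y hy
  have h := hMB.2.2 t x hx y hy
  clear hx hy
  induction h with
  | refl => exact Relation.ReflTransGen.refl
  | tail _ hstep ih => exact ih.trans (step _ _ hstep)

lemma sampleSize_eq {A : Matrix κ ι ℤ} (hA : IsHomogeneousMatrix A) {t : κ → ℤ}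
    {x : ι → ℕ} (hx : x ∈ fiberOf A t) : sampleSize A t = ∑ i, x i := by
  have hset : {n | ∃ y ∈ fiberOf A t, ∑ i, y i = n} = {∑ i, x i} := by
    ext n
    constructor
    · rintro ⟨y, hy, rfl⟩
      exact (sum_fiber_eq hA hy hx)
    · rintro rfl
      exact ⟨x, hx, rfl⟩
  rw [sampleSize, hset, csInf_singleton]

end Aux2

section Classes

variable {ι κ : Type*} [Fintype ι] [Fintype κ]

lemma natToInt_negOf_eq (z : ι → ℤ) :
    natToInt (negOf z) = natToInt (posOf z) - z := by
  funext i
  have := posOf_sub_negOf z i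
  simp only [natToInt, Pi.sub_apply]
  omega

lemma natToInt_posOf_eq (z : ι → ℤ) :
    natToInt (posOf z) = natToInt (negOf z) + z := by
  funext i
  have := posOf_sub_negOf z i
  simp only [natToInt, Pi.add_apply]
  omega

/-- The `B_{|t|-1}`-equivalence class of `x` in the fiber of `t`. -/
def classOf (A : Matrix κ ι ℤ) (t : κ → ℤ) (x : ι → ℕ) : Set (ι → ℕ) :=
  {y | y ∈ fiberOf A t ∧ Accessible (Bmoves A (sampleSize A t - 1)) x y}

lemma fiberClasses_eq (A : Matrix κ ι ℤ) (t : κ → ℤ) :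
    fiberClasses A t = {C | ∃ x ∈ fiberOf A t, C = classOf A t x} := rfl

lemma mem_classOf_self {A : Matrix κ ι ℤ} {t : κ → ℤ} {x : ι → ℕ}
    (hx : x ∈ fiberOf A t) : x ∈ classOf A t x :=
  ⟨hx, Relation.ReflTransGen.refl⟩

lemma classOf_eq_of_acc {A : Matrix κ ι ℤ} {t : κ → ℤ} {x x' : ι → ℕ}
    (h : Accessible (Bmoves A (sampleSize A t - 1)) x x') :
    classOf A t x = classOf A t x' :=
  Set.ext fun _ => and_congr_right fun _ =>
    ⟨fun hy => (accessible_symm h).trans hy, fun hy => h.trans hy⟩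

lemma classOf_eq_of_mem {A : Matrix κ ι ℤ} {t : κ → ℤ} {C : Set (ι → ℕ)} {y : ι → ℕ}
    (hC : C ∈ fiberClasses A t) (hy : y ∈ C) : C = classOf A t y := by
  obtain ⟨x, hx, rfl⟩ := hC
  exact classOf_eq_of_acc hy.2

end Classes



/-- `B_t`: the set of moves `z` with `A z⁺ = A z⁻ = t`. -/
def movesOfFiber {p d : ℕ} (A : Matrix (Fin d) (Fin p) ℤ) (t : Fin d → ℤ) :
    Set (Fin p → ℤ) :=
  {z | IsMove A z ∧ A.mulVec (natToInt (posOf z)) = t ∧ A.mulVec (natToInt (negOf z)) = t}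

/-- a minimal Markov basis meets `B_t` in exactly `K_t - 1` moves, each
connecting two different `B_{|t|-1}`-equivalence classes of the fiber of `t`, and the
graph induced on the equivalence classes by these moves is a tree. -/
theorem minimalMarkovBasis_structure
    {p d : ℕ} (hp : 0 < p) (hd : 0 < d)
    (A : Matrix (Fin d) (Fin p) ℤ) (hA : IsHomogeneousMatrix A)
    (B : Set (Fin p → ℤ)) (hB : IsMinimalMarkovBasis A B)
    (t : Fin d → ℤ) (ht : (fiberOf A t).Nonempty) :
    (B ∩ movesOfFiber A t).ncard = (fiberClasses A t).ncard - 1 ∧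
    (∀ z ∈ B ∩ movesOfFiber A t,
        ¬ Accessible (Bmoves A (sampleSize A t - 1)) (posOf z) (negOf z)) ∧
    (SimpleGraph.fromRel (fun C₁ C₂ : ↥(fiberClasses A t) =>
        ∃ z ∈ B ∩ movesOfFiber A t, posOf z ∈ C₁.1 ∧ negOf z ∈ C₂.1)).IsTree := by
  classical
  obtain ⟨x₀, hx₀⟩ := ht
  have hMB := hB.1
  have hmv := hMB.2.1
  set S := B ∩ movesOfFiber A t with hS
  set G := SimpleGraph.fromRel (fun C₁ C₂ : ↥(fiberClasses A t) =>
      ∃ z ∈ S, posOf z ∈ C₁.1 ∧ negOf z ∈ C₂.1) with hG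
  have hclmem : ∀ x, x ∈ fiberOf A t → classOf A t x ∈ fiberClasses A t :=
    fun x hx => ⟨x, hx, rfl⟩
  -- the zero move is not in B
  have h0B : (0 : Fin p → ℤ) ∉ B := by
    intro h0
    have hrep : Accessible (B \ {(0 : Fin p → ℤ)}) (negOf 0) (posOf 0) := by
      have h00 : negOf (0 : Fin p → ℤ) = posOf 0 := by funext i; simp [negOf, posOf]
      rw [h00]
      exact Relation.ReflTransGen.refl
    exact hB.2 _ (Set.sdiff_singleton_ssubset.mpr h0) (removal hMB hrep)
  -- basic facts about S
  have hSfact : ∀ z ∈ S, degOf z = sampleSize A t ∧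
      posOf z ∈ fiberOf A t ∧ negOf z ∈ fiberOf A t := by
    rintro z ⟨hzB, hzmv, hzp, hzn⟩
    exact ⟨(sampleSize_eq hA hzp).symm, hzp, hzn⟩
  have hn1 : ∀ z ∈ S, 1 ≤ sampleSize A t := by
    intro z hz
    by_contra h
    have hn0 : sampleSize A t = 0 := by omega
    have hdeg : degOf z = 0 := by rw [(hSfact z hz).1, hn0]
    have hzmv : IsMove A z := hz.2.1
    have hdneg : (∑ i, negOf z i) = 0 := by
      rw [← degOf_eq_sum_negOf hA hzmv, hdeg]
    have hdpos : (∑ i, posOf z i) = 0 := hdeg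
    have hz0 : z = 0 := by
      funext i
      have h1 : posOf z i = 0 := by
        exact Finset.sum_eq_zero_iff.mp hdpos i (Finset.mem_univ i)
      have h2 : negOf z i = 0 := by
        exact Finset.sum_eq_zero_iff.mp hdneg i (Finset.mem_univ i)
      have := posOf_sub_negOf z i
      rw [h1, h2] at this
      simpa using this.symm
    exact h0B (hz0 ▸ hz.1)
  have hsubB' : ∀ z ∈ S, B ∩ Bmoves A (sampleSize A t - 1) ⊆ B \ {z} := by
    rintro z hzS w ⟨hwB, hwm⟩
    refine ⟨hwB, fun hw => ?_⟩
    have hwz : w = z := hw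
    have h1 := hwm.2
    have h2 := (hSfact z hzS).1
    have h3 := hn1 z hzS
    rw [hwz, h2] at h1
    omega
  -- goal 2 : the two endpoints of a move of S lie in different classes
  have hsep1 : ∀ z ∈ S, ¬ Accessible (Bmoves A (sampleSize A t - 1)) (posOf z) (negOf z) := by
    intro z hzS hacc
    have h2 := accessible_of_bmoves hA hMB hacc
    have h3 : Accessible (B \ {z}) (posOf z) (negOf z) :=
      accessible_mono (hsubB' z hzS) h2
    exact hB.2 _ (Set.sdiff_singleton_ssubset.mpr hzS.1) (removal hMB (accessible_symm h3))
  -- accessibility within one class, via any superset of B ∩ Bmoves (n-1)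
  have hWCL : ∀ (B' : Set (Fin p → ℤ)), B ∩ Bmoves A (sampleSize A t - 1) ⊆ B' →
      ∀ C ∈ fiberClasses A t, ∀ a ∈ C, ∀ b ∈ C, Accessible B' a b := by
    intro B' hsub C hC a ha b hb
    rw [classOf_eq_of_mem hC ha] at hb
    exact accessible_mono hsub (accessible_of_bmoves hA hMB hb.2)
  -- moves of S other than z₀, as steps between classes
  let OS : (Fin p → ℤ) → ↥(fiberClasses A t) → ↥(fiberClasses A t) → Prop := fun z₀ C C' =>
    ∃ z' ∈ S, z' ≠ z₀ ∧
      ((posOf z' ∈ C.1 ∧ negOf z' ∈ C'.1) ∨ (posOf z' ∈ C'.1 ∧ negOf z' ∈ C.1))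
  have hOSsymm : ∀ z₀, Symmetric (OS z₀) := by
    rintro z₀ C C' ⟨z', h1, h2, h3⟩
    exact ⟨z', h1, h2, h3.symm⟩
  -- separation: the endpoints of z₀ ∈ S are not linked by the other moves of S
  have hSEP : ∀ z₀ ∈ S, ∀ C C' : ↥(fiberClasses A t), posOf z₀ ∈ C.1 → negOf z₀ ∈ C'.1 →
      ¬ Relation.ReflTransGen (OS z₀) C C' := by
    intro z₀ hz₀ C C' hpC hnC' hreach
    have hsub := hsubB' z₀ hz₀
    have claim : ∀ D' : ↥(fiberClasses A t), Relation.ReflTransGen (OS z₀) C D' →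
        ∀ b ∈ D'.1, Accessible (B \ {z₀}) (posOf z₀) b := by
      intro D' h
      induction h with
      | refl => intro b hb; exact hWCL _ hsub C.1 C.2 _ hpC _ hb
      | @tail D E hCD hstep ih =>
        intro b hb
        obtain ⟨z', hz'S, hz'ne, hor⟩ := hstep
        have hzB' : z' ∈ B \ {z₀} := ⟨hz'S.1, hz'ne⟩
        rcases hor with ⟨hpD, hnE⟩ | ⟨hpE, hnD⟩
        · have h1 := ih _ hpD
          have h2 : MStep (B \ {z₀}) (posOf z') (negOf z') :=
            ⟨z', hzB', Or.inr (natToInt_negOf_eq z')⟩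
          have h3 := hWCL _ hsub E.1 E.2 _ hnE _ hb
          exact (h1.tail h2).trans h3
        · have h1 := ih _ hnD
          have h2 : MStep (B \ {z₀}) (negOf z') (posOf z') :=
            ⟨z', hzB', Or.inl (natToInt_posOf_eq z')⟩
          have h3 := hWCL _ hsub E.1 E.2 _ hpE _ hb
          exact (h1.tail h2).trans h3
    have hfin : Accessible (B \ {z₀}) (posOf z₀) (negOf z₀) := claim C' hreach _ hnC'
    exact hB.2 _ (Set.sdiff_singleton_ssubset.mpr hz₀.1) (removal hMB (accessible_symm hfin))
  -- classification of a single B-step inside the fiber of t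
  have hstepcl : ∀ x, x ∈ fiberOf A t → ∀ y, MStep B x y → y ∈ fiberOf A t ∧
      (classOf A t x = classOf A t y ∨ ∃ z ∈ S,
        (posOf z ∈ classOf A t x ∧ negOf z ∈ classOf A t y) ∨
        (posOf z ∈ classOf A t y ∧ negOf z ∈ classOf A t x)) := by
    intro x hx y hstep
    have hy : y ∈ fiberOf A t := mem_fiber_of_mStep hmv hx hstep
    refine ⟨hy, ?_⟩
    obtain ⟨z, hzB, hcase⟩ := hstep
    have key : ∀ a b : Fin p → ℕ, a ∈ fiberOf A t → b ∈ fiberOf A t →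
        natToInt b = natToInt a + z →
        classOf A t a = classOf A t b ∨
          (z ∈ S ∧ posOf z ∈ classOf A t b ∧ negOf z ∈ classOf A t a) := by
      intro a b ha hb hc
      by_cases hdeg : degOf z ≤ sampleSize A t - 1
      · exact Or.inl (classOf_eq_of_acc
          (Relation.ReflTransGen.single ⟨z, ⟨hmv z hzB, hdeg⟩, Or.inl hc⟩))
      · right
        have hdle : degOf z ≤ ∑ i, a i := deg_le_of_step_add hA (hmv z hzB) hc
        have hsa : sampleSize A t = ∑ i, a i := sampleSize_eq hA ha
        have hdeq : degOf z = sampleSize A t := by omega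
        obtain ⟨u, hau, hbu⟩ := step_decomp_add hc
        have h1 : (∑ i, a i) = (∑ i, negOf z i) + ∑ i, u i := by
          rw [← Finset.sum_add_distrib]
          exact Finset.sum_congr rfl fun i _ => hau i
        have h2 : (∑ i, negOf z i) = degOf z := (degOf_eq_sum_negOf hA (hmv z hzB)).symm
        have h3 : (∑ i, u i) = 0 := by omega
        have hu0 : ∀ i, u i = 0 := fun i => Finset.sum_eq_zero_iff.mp h3 i (Finset.mem_univ i)
        have ha' : a = negOf z := funext fun i => by rw [hau i, hu0 i, add_zero]
        have hb' : b = posOf z := funext fun i => by rw [hbu i, hu0 i, add_zero]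
        have hposf : A.mulVec (natToInt (posOf z)) = t := by rw [← hb']; exact hb
        have hnegf : A.mulVec (natToInt (negOf z)) = t := by rw [← ha']; exact ha
        have hzS : z ∈ S := ⟨hzB, hmv z hzB, hposf, hnegf⟩
        refine ⟨hzS, ?_, ?_⟩
        · rw [← hb']; exact mem_classOf_self hb
        · rw [← ha']; exact mem_classOf_self ha
    rcases hcase with hc | hc
    · rcases key x y hx hy hc with h | ⟨hzS, h1, h2⟩
      · exact Or.inl h
      · exact Or.inr ⟨z, hzS, Or.inr ⟨h1, h2⟩⟩
    · have hc' : natToInt x = natToInt y + z := by rw [hc]; ring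
      rcases key y x hy hx hc' with h | ⟨hzS, h1, h2⟩
      · exact Or.inl h.symm
      · exact Or.inr ⟨z, hzS, Or.inl ⟨h1, h2⟩⟩
  -- one B-step induces reachability in the class graph
  have hstepreach : ∀ x (hx : x ∈ fiberOf A t) y (hy : y ∈ fiberOf A t), MStep B x y →
      G.Reachable ⟨classOf A t x, hclmem x hx⟩ ⟨classOf A t y, hclmem y hy⟩ := by
    intro x hx y hy hstep
    obtain ⟨-, hcl | ⟨z, hzS, hor⟩⟩ := hstepcl x hx y hstep
    · have hsub : (⟨classOf A t x, hclmem x hx⟩ : ↥(fiberClasses A t)) =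
          ⟨classOf A t y, hclmem y hy⟩ := Subtype.ext hcl
      rw [hsub]
    · by_cases heq : classOf A t x = classOf A t y
      · have hsub : (⟨classOf A t x, hclmem x hx⟩ : ↥(fiberClasses A t)) =
            ⟨classOf A t y, hclmem y hy⟩ := Subtype.ext heq
        rw [hsub]
      · refine SimpleGraph.Adj.reachable ?_
        rw [hG, SimpleGraph.fromRel_adj]
        refine ⟨fun h => heq (congrArg Subtype.val h), ?_⟩
        rcases hor with ⟨h1, h2⟩ | ⟨h1, h2⟩
        · exact Or.inl ⟨z, hzS, h1, h2⟩
        · exact Or.inr ⟨z, hzS, h1, h2⟩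
  have hpathreach : ∀ y (hy : y ∈ fiberOf A t), ∀ x, Accessible B x y →
      ∀ hx : x ∈ fiberOf A t,
      G.Reachable ⟨classOf A t x, hclmem x hx⟩ ⟨classOf A t y, hclmem y hy⟩ := by
    intro y hy x hacc
    induction hacc using Relation.ReflTransGen.head_induction_on with
    | refl => intro _; exact SimpleGraph.Reachable.refl _
    | @head a c hstep hrest ih =>
      intro ha
      have hc : c ∈ fiberOf A t := mem_fiber_of_mStep hmv ha hstep
      exact (hstepreach a ha c hc hstep).trans (ih hc)
  have hconn : G.Connected := by
    rw [SimpleGraph.connected_iff]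
    refine ⟨?_, ⟨⟨classOf A t x₀, hclmem x₀ hx₀⟩⟩⟩
    intro v w
    obtain ⟨x, hx, hCx⟩ := v.2
    obtain ⟨x', hx', hCx'⟩ := w.2
    have hv : v = ⟨classOf A t x, hclmem x hx⟩ := Subtype.ext hCx
    have hw : w = ⟨classOf A t x', hclmem x' hx'⟩ := Subtype.ext hCx'
    rw [hv, hw]
    exact hpathreach x' hx' x (hMB.2.2 t x hx x' hx') hx
  -- class containing a point is unique
  have heqcl : ∀ (u₁ u₂ : ↥(fiberClasses A t)) (x : Fin p → ℕ), x ∈ u₁.1 → x ∈ u₂.1 →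
      u₁ = u₂ := by
    intro u₁ u₂ x h1 h2
    exact Subtype.ext ((classOf_eq_of_mem u₁.2 h1).trans (classOf_eq_of_mem u₂.2 h2).symm)
  have hadj_real : ∀ v w : ↥(fiberClasses A t), G.Adj v w →
      ∃ z ∈ S, (posOf z ∈ v.1 ∧ negOf z ∈ w.1) ∨ (posOf z ∈ w.1 ∧ negOf z ∈ v.1) := by
    intro v w hadj
    rw [hG, SimpleGraph.fromRel_adj] at hadj
    obtain ⟨hne, h | h⟩ := hadj
    · obtain ⟨z, hzS, h1, h2⟩ := h; exact ⟨z, hzS, Or.inl ⟨h1, h2⟩⟩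
    · obtain ⟨z, hzS, h1, h2⟩ := h; exact ⟨z, hzS, Or.inr ⟨h1, h2⟩⟩
  have hacyc : G.IsAcyclic := by
    rw [SimpleGraph.isAcyclic_iff_forall_adj_isBridge]
    intro v w hadj
    rw [SimpleGraph.isBridge_iff]
    refine fun hreach => ?_
    obtain ⟨z, hzS, hor⟩ := hadj_real v w hadj
    obtain ⟨W⟩ := hreach
    have hwalkconv : ∀ (a b : ↥(fiberClasses A t)),
        (G \ SimpleGraph.fromEdgeSet {s(v, w)}).Walk a b →
        Relation.ReflTransGen (OS z) a b := by
      intro a b W'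
      induction W' with
      | nil => exact Relation.ReflTransGen.refl
      | @cons a' c' b' hadj' Wrest ih =>
        rw [SimpleGraph.sdiff_adj] at hadj'
        obtain ⟨hGadj, hnadj⟩ := hadj'
        rw [SimpleGraph.fromEdgeSet_adj, Set.mem_singleton_iff] at hnadj
        have hne' : a' ≠ c' := hGadj.ne
        have hedge_ne : s(a', c') ≠ s(v, w) := fun h => hnadj ⟨h, hne'⟩
        obtain ⟨z', hz'S, hor'⟩ := hadj_real a' c' hGadj
        have hz'ne : z' ≠ z := by
          rintro rfl
          apply hedge_ne
          rcases hor with ⟨hpv, hnw⟩ | ⟨hpw, hnv⟩ <;> rcases hor' with ⟨hpa, hnc⟩ | ⟨hpc, hna⟩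
          · rw [heqcl a' v _ hpa hpv, heqcl c' w _ hnc hnw]
          · rw [heqcl a' w _ hna hnw, heqcl c' v _ hpc hpv, Sym2.eq_swap]
          · rw [heqcl a' w _ hpa hpw, heqcl c' v _ hnc hnv, Sym2.eq_swap]
          · rw [heqcl a' v _ hna hnv, heqcl c' w _ hpc hpw]
        exact Relation.ReflTransGen.head ⟨z', hz'S, hz'ne, hor'⟩ ih
    have hOSreach := hwalkconv v w W
    rcases hor with ⟨hpv, hnw⟩ | ⟨hpw, hnv⟩
    · exact hSEP z hzS v w hpv hnw hOSreach
    · exact hSEP z hzS w v hpw hnv (@Std.Symm.symm _ _ (@Relation.ReflTransGen.stdSymm _ _ ⟨hOSsymm z⟩) _ _ hOSreach)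
  have htree : G.IsTree := ⟨hconn, hacyc⟩
  -- finiteness
  have hfibfin : (fiberOf A t).Finite := by
    have hsub2 : fiberOf A t ⊆ Set.pi Set.univ (fun _ : Fin p => Set.Iic (sampleSize A t)) := by
      intro x hx
      rw [Set.mem_pi]
      intro i _
      rw [Set.mem_Iic, sampleSize_eq hA hx]
      exact Finset.single_le_sum (fun _ _ => Nat.zero_le _) (Finset.mem_univ i)
    exact (Set.Finite.pi fun _ => Set.finite_Iic _).subset hsub2
  have hclsfin : (fiberClasses A t).Finite := by
    refine (hfibfin.image (classOf A t)).subset ?_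
    rintro C ⟨x, hx, rfl⟩
    exact Set.mem_image_of_mem _ hx
  haveI : Finite ↥(fiberClasses A t) := hclsfin.to_subtype
  haveI : Fintype ↥(fiberClasses A t) := Fintype.ofFinite _
  haveI : Fintype ↥G.edgeSet := Fintype.ofFinite _
  have hcard := htree.card_edgeFinset
  -- the bijection between S and the edges of G
  have hedge_of : ∀ z, ∀ hz : z ∈ S,
      s((⟨classOf A t (posOf z), hclmem _ (hSfact z hz).2.1⟩ : ↥(fiberClasses A t)),
        (⟨classOf A t (negOf z), hclmem _ (hSfact z hz).2.2⟩ : ↥(fiberClasses A t))) ∈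
        G.edgeSet := by
    intro z hz
    rw [SimpleGraph.mem_edgeSet, hG, SimpleGraph.fromRel_adj]
    constructor
    · intro h
      have hcl : classOf A t (posOf z) = classOf A t (negOf z) := congrArg Subtype.val h
      have hmem : negOf z ∈ classOf A t (posOf z) :=
        hcl ▸ mem_classOf_self (hSfact z hz).2.2
      exact hsep1 z hz hmem.2
    · exact Or.inl ⟨z, hz, mem_classOf_self (hSfact z hz).2.1,
        mem_classOf_self (hSfact z hz).2.2⟩
  let f : ↥S → ↥G.edgeSet := fun z =>
    ⟨s((⟨classOf A t (posOf z.1), hclmem _ (hSfact z.1 z.2).2.1⟩ : ↥(fiberClasses A t)),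
       (⟨classOf A t (negOf z.1), hclmem _ (hSfact z.1 z.2).2.2⟩ : ↥(fiberClasses A t))),
      hedge_of z.1 z.2⟩
  have hfinj : Function.Injective f := by
    rintro ⟨z, hz⟩ ⟨z', hz'⟩ heq
    have heq2 := congrArg Subtype.val heq
    simp only [f] at heq2
    rw [Sym2.eq_iff] at heq2
    refine Subtype.ext ?_
    by_contra hne
    have hstep : OS z (⟨classOf A t (posOf z), hclmem _ (hSfact z hz).2.1⟩ : ↥(fiberClasses A t))
        ⟨classOf A t (negOf z), hclmem _ (hSfact z hz).2.2⟩ := by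
      refine ⟨z', hz', fun h => hne h.symm, ?_⟩
      rcases heq2 with ⟨h1, h2⟩ | ⟨h1, h2⟩
      · have e1 : classOf A t (posOf z) = classOf A t (posOf z') := congrArg Subtype.val h1
        have e2 : classOf A t (negOf z) = classOf A t (negOf z') := congrArg Subtype.val h2
        refine Or.inl ⟨?_, ?_⟩
        · show posOf z' ∈ classOf A t (posOf z)
          rw [e1]; exact mem_classOf_self (hSfact z' hz').2.1
        · show negOf z' ∈ classOf A t (negOf z)
          rw [e2]; exact mem_classOf_self (hSfact z' hz').2.2
      · have e1 : classOf A t (posOf z) = classOf A t (negOf z') := congrArg Subtype.val h1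
        have e2 : classOf A t (negOf z) = classOf A t (posOf z') := congrArg Subtype.val h2
        refine Or.inr ⟨?_, ?_⟩
        · show posOf z' ∈ classOf A t (negOf z)
          rw [e2]; exact mem_classOf_self (hSfact z' hz').2.1
        · show negOf z' ∈ classOf A t (posOf z)
          rw [e1]; exact mem_classOf_self (hSfact z' hz').2.2
    exact hSEP z hz _ _ (mem_classOf_self (hSfact z hz).2.1)
      (mem_classOf_self (hSfact z hz).2.2) (Relation.ReflTransGen.single hstep)
  have hfsurj : Function.Surjective f := by
    rintro ⟨e, he⟩
    induction e using Sym2.ind with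
    | _ a b =>
      rw [SimpleGraph.mem_edgeSet] at he
      obtain ⟨z, hzS, hor⟩ := hadj_real a b he
      refine ⟨⟨z, hzS⟩, Subtype.ext ?_⟩
      show s((⟨classOf A t (posOf z), _⟩ : ↥(fiberClasses A t)), ⟨classOf A t (negOf z), _⟩)
          = s(a, b)
      rcases hor with ⟨hpa, hnb⟩ | ⟨hpb, hna⟩
      · rw [heqcl ⟨classOf A t (posOf z), hclmem _ (hSfact z hzS).2.1⟩ a _
            (mem_classOf_self (hSfact z hzS).2.1) hpa,
          heqcl ⟨classOf A t (negOf z), hclmem _ (hSfact z hzS).2.2⟩ b _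
            (mem_classOf_self (hSfact z hzS).2.2) hnb]
      · rw [heqcl ⟨classOf A t (posOf z), hclmem _ (hSfact z hzS).2.1⟩ b _
            (mem_classOf_self (hSfact z hzS).2.1) hpb,
          heqcl ⟨classOf A t (negOf z), hclmem _ (hSfact z hzS).2.2⟩ a _
            (mem_classOf_self (hSfact z hzS).2.2) hna, Sym2.eq_swap]
  have hcount : S.ncard = (fiberClasses A t).ncard - 1 := by
    have h1 : Nat.card ↥S = Nat.card ↥G.edgeSet :=
      Nat.card_eq_of_bijective f ⟨hfinj, hfsurj⟩
    have h2 : Nat.card ↥G.edgeSet = G.edgeFinset.card := by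
      rw [Nat.card_eq_fintype_card, SimpleGraph.edgeFinset_card]
    have h3 : Nat.card ↥(fiberClasses A t) = Fintype.card ↥(fiberClasses A t) :=
      Nat.card_eq_fintype_card
    rw [← Nat.card_coe_set_eq, ← Nat.card_coe_set_eq, h1, h2, h3]
    omega
  exact ⟨hcount, hsep1, htree⟩
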